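/- arXiv:2112.15515 — 2 statements merged into one kernel-verified Lean document; each statement's English description precedes it below -/
import Mathlib

section
/- Let G be a directed graph (quiver) on a vertex set V that is acyclic, and let S ⊆ V be a convex subset of vertices. Then the contraction G/S, obtained by shrinking S to a single vertex, is again acyclic. -/
/-!
STATEMENT 0: If `G` is an acyclic quiver on `V` and `S ⊆ V` is convex, then the
contraction `G/S` (shrinking `S` to a single vertex `*`) is acyclic.
-/

open Quiver

/-- The list of vertices visited by a path (including both endpoints). -/
def pathVerts {V : Type} [Quiver.{1} V] : ∀ {a b : V}, Path a b → List V
  | a, _, .nil => [a]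
  | _, b, .cons p _ => pathVerts p ++ [b]

/-- A quiver is acyclic if there is no nonempty path from a vertex to itself. -/
def QuiverAcyclic (V : Type) [Quiver.{1} V] : Prop :=
  ∀ (a : V) (p : Path a a), p.length = 0

/-- A set of vertices is convex if every path whose endpoints lie in `S`
has all of its vertices in `S`. -/
def QuiverConvex {V : Type} [Quiver.{1} V] (S : Set V) : Prop :=
  ∀ ⦃a b : V⦄, a ∈ S → b ∈ S → ∀ p : Path a b, ∀ v ∈ pathVerts p, v ∈ S

/-- Vertex set of the contraction `G/S`: the vertices outside `S` together with
one extra vertex `*` (represented by `none`). -/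
def ContractV {V : Type} (S : Set V) : Type := Option {v : V // v ∉ S}

open Classical in
/-- The map sending a vertex of `G` to the corresponding vertex of `G/S`. -/
noncomputable def contractVert {V : Type} (S : Set V) (v : V) : ContractV S :=
  if h : v ∈ S then none else some ⟨v, h⟩

/-- Edges of the contraction `G/S`: all edges of `G` except those with both
endpoints in `S`, with endpoints replaced using `contractVert`. -/
noncomputable instance contractQuiver {V : Type} [Quiver.{1} V] (S : Set V) :
    Quiver.{1} (ContractV S) where
  Hom x y :=
    { p : Σ a b : V, a ⟶ b //
        contractVert S p.1 = x ∧ contractVert S p.2.1 = y ∧ ¬(p.1 ∈ S ∧ p.2.1 ∈ S) }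


lemma contractVert_eq_none {V : Type} {S : Set V} {v : V} :
    contractVert S v = (none : ContractV S) ↔ v ∈ S := by
  unfold contractVert
  by_cases hv : v ∈ S
  · have e : contractVert S v = (none : ContractV S) := dif_pos hv
    exact ⟨fun _ => hv, fun _ => e⟩
  · have e : contractVert S v = (some ⟨v, hv⟩ : ContractV S) := dif_neg hv
    exact ⟨fun h => absurd (e.symm.trans h) (Option.some_ne_none _), fun h => absurd h hv⟩

lemma contractVert_eq_some {V : Type} {S : Set V} {v : V} {w : {v : V // v ∉ S}}
    (h : contractVert S v = some w) : v = w.1 := by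
  unfold contractVert at h
  by_cases hv : v ∈ S
  · have e : contractVert S v = (none : ContractV S) := dif_pos hv
    exact absurd (e.symm.trans h).symm (Option.some_ne_none _)
  · have e : contractVert S v = (some ⟨v, hv⟩ : ContractV S) := dif_neg hv
    have h := e.symm.trans h
    injection h with h
    rw [← h]

lemma tgt_mem_pathVerts {V : Type} [Quiver.{1} V] :
    ∀ {a b : V} (p : Path a b), b ∈ pathVerts p
  | _, _, .nil => by simp [pathVerts]
  | _, _, .cons p e => by simp [pathVerts]

lemma mem_pathVerts_comp {V : Type} [Quiver.{1} V] {a b : V} (p : Path a b) {v : V}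
    (hv : v ∈ pathVerts p) : ∀ {c : V} (q : Path b c), v ∈ pathVerts (p.comp q)
  | _, .nil => hv
  | c, .cons q e => by
      simp only [Quiver.Path.comp_cons, pathVerts, List.mem_append]
      exact Or.inl (mem_pathVerts_comp p hv q)

lemma mem_pathVerts_cons {V : Type} [Quiver.{1} V] {a b c : V} (p : Path a b) (e : b ⟶ c) :
    b ∈ pathVerts (p.cons e) := by
  simp only [pathVerts, List.mem_append]
  exact Or.inl (tgt_mem_pathVerts p)

/-- Key lifting lemma: any path in `G/S` either has length zero, or lifts to a
path of `G` of positive length avoiding "both endpoints in `S`", or it has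
passed through `*` and we retain the suffix since the last visit to `*`
together with the prefix up to the first visit to `*`. -/
lemma contract_key {V : Type} [Quiver.{1} V] (S : Set V) (hS : QuiverConvex S)
    {x y : ContractV S} (q : Path x y) :
    q.length = 0 ∨
    (∃ (a b : V) (p : Path a b), contractVert S a = x ∧ contractVert S b = y ∧
      p.length ≠ 0 ∧ ¬(a ∈ S ∧ b ∈ S)) ∨
    (∃ (a b : V) (_ : Path a b) (a₀ b₀ : V) (_ : Path a₀ b₀),
      a ∈ S ∧ b ∉ S ∧ contractVert S b = y ∧ contractVert S a₀ = x ∧ b₀ ∈ S) := by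
  induction q with
  | nil => exact Or.inl rfl
  | @cons y z q' e ih =>
    obtain ⟨⟨a', b', f⟩, hea, heb, hef⟩ := e
    rcases ih with h0 | ⟨a, b, p, hax, hby, hlen, hnab⟩ |
        ⟨a, b, p, a₀, b₀, p₀, haS, hbnS, hby, hx, hb₀S⟩
    · -- q' has length 0, so x = y
      have hxy : x = y := Quiver.Path.eq_of_length_zero q' h0
      refine Or.inr (Or.inl ⟨a', b', f.toPath, ?_, heb, ?_, hef⟩)
      · rw [hea, hxy]
      · simp [Quiver.Hom.toPath]
    · -- lifted state
      by_cases hbS : b ∈ S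
      · -- y = none : move to the "passed through *" state
        have hy : y = none := by rw [← hby, contractVert_eq_none.2 hbS]
        have ha'S : a' ∈ S := contractVert_eq_none.1 (by rw [hea, hy])
        have hb'S : b' ∉ S := fun h => hef ⟨ha'S, h⟩
        exact Or.inr (Or.inr ⟨a', b', f.toPath, a, b, p, ha'S, hb'S, heb, hax, hbS⟩)
      · -- y = some ⟨b, hbS⟩, so a' = b
        have hy : y = some ⟨b, hbS⟩ := by rw [← hby]; exact dif_neg hbS
        have ha' : a' = b := contractVert_eq_some (by rw [hea, hy])
        subst ha'
        refine Or.inr (Or.inl ⟨a, b', p.cons f, hax, heb, by simp, ?_⟩)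
        rintro ⟨h1, h2⟩
        exact hbS (hS h1 h2 (p.cons f) a' (mem_pathVerts_cons p f))
    · -- "passed through *" state
      have hy : y = some ⟨b, hbnS⟩ := by rw [← hby]; exact dif_neg hbnS
      have ha' : a' = b := contractVert_eq_some (by rw [hea, hy])
      subst ha'
      by_cases hcS : b' ∈ S
      · exact absurd (hS haS hcS (p.cons f) a' (mem_pathVerts_cons p f)) hbnS
      · exact Or.inr (Or.inr ⟨a, b', p.cons f, a₀, b₀, p₀, haS, hcS, heb, hx, hb₀S⟩)

theorem contraction_of_convex_acyclic {V : Type} [Quiver.{1} V]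
    (hG : QuiverAcyclic V) (S : Set V) (hS : QuiverConvex S) :
    QuiverAcyclic (ContractV S) := by
  intro x q
  rcases contract_key S hS q with h | ⟨a, b, p, hax, hbx, hlen, hnab⟩ |
      ⟨a, b, p, a₀, b₀, p₀, haS, hbnS, hbx, hx, hb₀S⟩
  · exact h
  · exfalso
    by_cases haS : a ∈ S
    · have hxn : x = none := by rw [← hax, contractVert_eq_none.2 haS]
      exact hnab ⟨haS, contractVert_eq_none.1 (by rw [hbx, hxn])⟩
    · have hx' : x = some ⟨a, haS⟩ := by rw [← hax]; exact dif_neg haS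
      have hb : b = a := contractVert_eq_some (by rw [hbx, hx'])
      subst hb
      exact hlen (hG b p)
  · have hx' : x = some ⟨b, hbnS⟩ := by rw [← hbx]; exact dif_neg hbnS
    have ha₀ : a₀ = b := contractVert_eq_some (by rw [hx, hx'])
    subst ha₀
    exact absurd (hS haS hb₀S (p.comp p₀) a₀ (mem_pathVerts_comp p (tgt_mem_pathVerts p) p₀))
      hbnS
end

section
/- Let ψ and φ be finite acyclic directed graphs and let f : F(ψ) → F(φ) be any functor between their path categories. Then f can be decomposed as a finite composite of elementary morphisms, f = fₙ ∘ … ∘ f₁; more precisely, there exist finite acyclic directed graphs ψ′, ψ″, ψ‴ and functors such that f factors as F(ψ) → F(ψ′) → F(ψ″) → F(ψ‴) → F(φ), where the first arrow is a composite of edge subdivisions, the second a composite of coarse-grainings of vertices, the third a composite of coarse-grainings of edges, and the last a composite of isomorphisms, vertex additions, edge additions, and edge subdivisions. -/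
open CategoryTheory

/-- A directed graph `ψ = (V, E, s, t)`. -/
structure DiGraph where
  V : Type
  E : Type
  s : E → V
  t : E → V

/-- The quiver structure on the vertices of a directed graph: an arrow `a ⟶ b`
is an edge with source `a` and target `b`. -/
instance DiGraph.quiver (G : DiGraph) : Quiver.{0} G.V :=
  ⟨fun a b => { e : G.E // G.s e = a ∧ G.t e = b }⟩

/-- A directed graph is acyclic if it has no nonempty path from a vertex to
itself. -/
def DiGraph.Acyclic (G : DiGraph) : Prop :=
  ∀ (a : G.V) (p : Quiver.Path a a), p.length = 0

/-- A causal network: a finite acyclic directed graph. -/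
def IsCausalNet (G : DiGraph) : Prop :=
  G.Acyclic ∧ Finite G.V ∧ Finite G.E

/-- The path category (free category) `F(ψ)` of a directed graph. -/
abbrev DiGraph.PathCat (G : DiGraph) := Paths G.V

/-- A map of directed graphs sending vertices to vertices and edges to edges
compatibly with sources and targets. -/
structure GraphMap (G H : DiGraph) where
  vMap : G.V → H.V
  eMap : G.E → H.E
  hs : ∀ e, H.s (eMap e) = vMap (G.s e)
  ht : ∀ e, H.t (eMap e) = vMap (G.t e)

/-- The prefunctor on quivers induced by a map of directed graphs. -/
def GraphMap.toPrefunctor {G H : DiGraph} (M : GraphMap G H) :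
    G.V ⥤q H.PathCat where
  obj v := (Paths.of H.V).obj (M.vMap v)
  map {a b} e :=
    (Paths.of H.V).map ⟨M.eMap e.1,
      by rw [M.hs]; exact congrArg M.vMap e.2.1,
      by rw [M.ht]; exact congrArg M.vMap e.2.2⟩

/-- The functor between path categories induced by a map of directed graphs. -/
def GraphMap.functor {G H : DiGraph} (M : GraphMap G H) :
    G.PathCat ⥤ H.PathCat :=
  Paths.lift M.toPrefunctor

/-- `F` is induced by an isomorphism of directed graphs. -/
def IsIsoMor (G H : DiGraph) (F : G.PathCat ⥤ H.PathCat) : Prop :=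
  ∃ M : GraphMap G H,
    Function.Bijective M.vMap ∧ Function.Bijective M.eMap ∧ F = M.functor

/-- `F` is induced by adding a single (isolated) vertex to `G`. -/
def IsAddVertex (G H : DiGraph) (F : G.PathCat ⥤ H.PathCat) : Prop :=
  ∃ M : GraphMap G H,
    Function.Injective M.vMap ∧ Function.Bijective M.eMap ∧
    (∃ v₀ : H.V, v₀ ∉ Set.range M.vMap ∧
      ∀ w : H.V, w = v₀ ∨ w ∈ Set.range M.vMap) ∧
    F = M.functor

/-- `F` is induced by adding a single edge between two vertices of `G`. -/
def IsAddEdge (G H : DiGraph) (F : G.PathCat ⥤ H.PathCat) : Prop :=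
  ∃ M : GraphMap G H,
    Function.Bijective M.vMap ∧ Function.Injective M.eMap ∧
    (∃ e₀ : H.E, e₀ ∉ Set.range M.eMap ∧
      ∀ e : H.E, e = e₀ ∨ e ∈ Set.range M.eMap) ∧
    F = M.functor

open Classical in
/-- The prefunctor induced by subdividing the edge `e₀` of `G`: the data are
the map on the remaining vertices and edges, the new vertex `x` and the
two new edges `e₁ : s e₀ → x` and `e₂ : x → t e₀`; the edge `e₀` is sent to the
length-two path through `x`. -/
noncomputable def subdivPrefunctor {G H : DiGraph} (e₀ : G.E)
    (vMap : G.V → H.V) (x : H.V) (eMap : { e : G.E // e ≠ e₀ } → H.E)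
    (e₁ e₂ : H.E)
    (hs : ∀ e, H.s (eMap e) = vMap (G.s e.1))
    (ht : ∀ e, H.t (eMap e) = vMap (G.t e.1))
    (hs1 : H.s e₁ = vMap (G.s e₀)) (ht1 : H.t e₁ = x)
    (hs2 : H.s e₂ = x) (ht2 : H.t e₂ = vMap (G.t e₀)) :
    G.V ⥤q H.PathCat where
  obj v := (Paths.of H.V).obj (vMap v)
  map {a b} e :=
    if h : e.1 = e₀ then
      ((Paths.of H.V).map ⟨e₁, by rw [hs1, ← h]; exact congrArg vMap e.2.1, ht1⟩ :
          (Paths.of H.V).obj (vMap a) ⟶ (Paths.of H.V).obj x) ≫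
        (Paths.of H.V).map ⟨e₂, hs2, by rw [ht2, ← h]; exact congrArg vMap e.2.2⟩
    else
      (Paths.of H.V).map ⟨eMap ⟨e.1, h⟩,
        by rw [hs]; exact congrArg vMap e.2.1,
        by rw [ht]; exact congrArg vMap e.2.2⟩

/-- `F` is induced by subdividing an edge of `G` by a new vertex. -/
def IsSubdivision (G H : DiGraph) (F : G.PathCat ⥤ H.PathCat) : Prop :=
  ∃ (e₀ : G.E) (vMap : G.V → H.V) (x : H.V)
    (eMap : { e : G.E // e ≠ e₀ } → H.E) (e₁ e₂ : H.E)
    (hs : ∀ e, H.s (eMap e) = vMap (G.s e.1))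
    (ht : ∀ e, H.t (eMap e) = vMap (G.t e.1))
    (hs1 : H.s e₁ = vMap (G.s e₀)) (ht1 : H.t e₁ = x)
    (hs2 : H.s e₂ = x) (ht2 : H.t e₂ = vMap (G.t e₀)),
    Function.Injective vMap ∧ x ∉ Set.range vMap ∧
    (∀ w : H.V, w = x ∨ w ∈ Set.range vMap) ∧
    Function.Injective eMap ∧ e₁ ≠ e₂ ∧
    e₁ ∉ Set.range eMap ∧ e₂ ∉ Set.range eMap ∧
    (∀ e : H.E, e = e₁ ∨ e = e₂ ∨ e ∈ Set.range eMap) ∧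
    F = Paths.lift (subdivPrefunctor e₀ vMap x eMap e₁ e₂ hs ht hs1 ht1 hs2 ht2)

open Classical in
/-- The prefunctor induced by merging a set `Sm` of parallel edges of `G`
(with common source `a` and common target `b`) into the single edge `em`. -/
noncomputable def edgeCoarsePrefunctor {G H : DiGraph} (Sm : Set G.E)
    (vMap : G.V → H.V) (eMap : { e : G.E // e ∉ Sm } → H.E) (em : H.E)
    (a b : G.V) (hcom : ∀ e ∈ Sm, G.s e = a ∧ G.t e = b)
    (hs : ∀ e, H.s (eMap e) = vMap (G.s e.1))
    (ht : ∀ e, H.t (eMap e) = vMap (G.t e.1))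
    (hsm : H.s em = vMap a) (htm : H.t em = vMap b) :
    G.V ⥤q H.PathCat where
  obj v := (Paths.of H.V).obj (vMap v)
  map {u w} e :=
    if h : e.1 ∈ Sm then
      (Paths.of H.V).map ⟨em,
        by rw [hsm, ← (hcom e.1 h).1]; exact congrArg vMap e.2.1,
        by rw [htm, ← (hcom e.1 h).2]; exact congrArg vMap e.2.2⟩
    else
      (Paths.of H.V).map ⟨eMap ⟨e.1, h⟩,
        by rw [hs]; exact congrArg vMap e.2.1,
        by rw [ht]; exact congrArg vMap e.2.2⟩

/-- `F` is induced by the coarse-graining of a (nonempty) set of edges with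
common source and target into a single edge. -/
def IsEdgeCoarse (G H : DiGraph) (F : G.PathCat ⥤ H.PathCat) : Prop :=
  ∃ (Sm : Set G.E) (vMap : G.V → H.V) (eMap : { e : G.E // e ∉ Sm } → H.E)
    (em : H.E) (a b : G.V) (hcom : ∀ e ∈ Sm, G.s e = a ∧ G.t e = b)
    (hs : ∀ e, H.s (eMap e) = vMap (G.s e.1))
    (ht : ∀ e, H.t (eMap e) = vMap (G.t e.1))
    (hsm : H.s em = vMap a) (htm : H.t em = vMap b),
    Sm.Nonempty ∧ Function.Bijective vMap ∧ Function.Injective eMap ∧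
    em ∉ Set.range eMap ∧ (∀ e : H.E, e = em ∨ e ∈ Set.range eMap) ∧
    F = Paths.lift (edgeCoarsePrefunctor Sm vMap eMap em a b hcom hs ht hsm htm)

open Classical in
/-- The collapse map on vertices shrinking the subset `S` to the point `x`. -/
noncomputable def collapseV {G H : DiGraph} (S : Set G.V) (x : H.V)
    (vMap : { v : G.V // v ∉ S } → H.V) (v : G.V) : H.V :=
  if h : v ∈ S then x else vMap ⟨v, h⟩

open Classical in
/-- The prefunctor induced by shrinking the induced subgraph on the vertex set
`S` of `G` to the single point `x`: edges with both endpoints in `S` are sent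
to the identity path at `x`. -/
noncomputable def vertexCoarsePrefunctor {G H : DiGraph} (S : Set G.V)
    (x : H.V) (vMap : { v : G.V // v ∉ S } → H.V)
    (eMap : { e : G.E // ¬(G.s e ∈ S ∧ G.t e ∈ S) } → H.E)
    (hs : ∀ e, H.s (eMap e) = collapseV S x vMap (G.s e.1))
    (ht : ∀ e, H.t (eMap e) = collapseV S x vMap (G.t e.1)) :
    G.V ⥤q H.PathCat where
  obj v := (Paths.of H.V).obj (collapseV S x vMap v)
  map {u w} e :=
    if h : G.s e.1 ∈ S ∧ G.t e.1 ∈ S then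
      eqToHom (by
        have hu : u ∈ S := e.2.1 ▸ h.1
        have hw : w ∈ S := e.2.2 ▸ h.2
        show (Paths.of H.V).obj (collapseV S x vMap u) = (Paths.of H.V).obj (collapseV S x vMap w)
        unfold collapseV
        rw [dif_pos hu, dif_pos hw])
    else
      (Paths.of H.V).map ⟨eMap ⟨e.1, h⟩,
        by rw [hs]; exact congrArg (collapseV S x vMap) e.2.1,
        by rw [ht]; exact congrArg (collapseV S x vMap) e.2.2⟩

/-- `F` is induced by the coarse-graining of a set of vertices: the induced
subgraph on `S` is shrunk to a single point. -/
def IsVertexCoarse (G H : DiGraph) (F : G.PathCat ⥤ H.PathCat) : Prop :=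
  ∃ (S : Set G.V) (x : H.V) (vMap : { v : G.V // v ∉ S } → H.V)
    (eMap : { e : G.E // ¬(G.s e ∈ S ∧ G.t e ∈ S) } → H.E)
    (hs : ∀ e, H.s (eMap e) = collapseV S x vMap (G.s e.1))
    (ht : ∀ e, H.t (eMap e) = collapseV S x vMap (G.t e.1)),
    Function.Injective vMap ∧ x ∉ Set.range vMap ∧
    (∀ w : H.V, w = x ∨ w ∈ Set.range vMap) ∧
    Function.Bijective eMap ∧
    F = Paths.lift (vertexCoarsePrefunctor S x vMap eMap hs ht)

/-- `F` is an elementary morphism: it is induced by a graph isomorphism, a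
vertex addition, an edge addition, an edge subdivision, a coarse-graining of
edges or a coarse-graining of vertices. -/
def IsElementary (G H : DiGraph) (F : G.PathCat ⥤ H.PathCat) : Prop :=
  IsIsoMor G H F ∨ IsAddVertex G H F ∨ IsAddEdge G H F ∨
    IsSubdivision G H F ∨ IsEdgeCoarse G H F ∨ IsVertexCoarse G H F

/-- `CompOf P G H F` : the functor `F` is a finite composite of functors
satisfying `P`, passing only through causal networks (finite acyclic graphs). -/
inductive CompOf (P : ∀ G H : DiGraph, (G.PathCat ⥤ H.PathCat) → Prop) :
    ∀ G H : DiGraph, (G.PathCat ⥤ H.PathCat) → Prop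
  | id (G : DiGraph) : CompOf P G G (Functor.id _)
  | comp {G G' G'' : DiGraph} {F : G.PathCat ⥤ G'.PathCat}
      {F' : G'.PathCat ⥤ G''.PathCat} :
      P G G' F → IsCausalNet G' → CompOf P G' G'' F' → CompOf P G G'' (F ⋙ F')

namespace Decomp
open Quiver

/-- canonical arrow of an edge -/
def ed {G : DiGraph} (e : G.E) : @Quiver.Hom G.V _ (G.s e) (G.t e) := ⟨e, rfl, rfl⟩

/-- build a functor out of a path category from vertex/edge data -/
noncomputable def mkP (G : DiGraph) {C : Type*} [Category C] (fo : G.V → C)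
    (fe : ∀ e : G.E, fo (G.s e) ⟶ fo (G.t e)) : G.V ⥤q C where
  obj := fo
  map {a b} ε :=
    eqToHom (congrArg fo ε.2.1).symm ≫ fe ε.1 ≫ eqToHom (congrArg fo ε.2.2)

noncomputable def mkF (G : DiGraph) {C : Type*} [Category C] (fo : G.V → C)
    (fe : ∀ e : G.E, fo (G.s e) ⟶ fo (G.t e)) : G.PathCat ⥤ C :=
  Paths.lift (mkP G fo fe)

lemma mkF_obj (G : DiGraph) {C : Type*} [Category C] (fo : G.V → C)
    (fe : ∀ e : G.E, fo (G.s e) ⟶ fo (G.t e)) (v : G.V) :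
    (mkF G fo fe).obj v = fo v := rfl

lemma mkF_map (G : DiGraph) {C : Type*} [Category C] (fo : G.V → C)
    (fe : ∀ e : G.E, fo (G.s e) ⟶ fo (G.t e)) {a b : G.V} (ε : @Quiver.Hom G.V _ a b) :
    (mkF G fo fe).map ε.toPath =
      eqToHom (congrArg fo ε.2.1).symm ≫ fe ε.1 ≫ eqToHom (congrArg fo ε.2.2) :=
  Paths.lift_toPath _ _

lemma mkF_ed (G : DiGraph) {C : Type*} [Category C] (fo : G.V → C)
    (fe : ∀ e : G.E, fo (G.s e) ⟶ fo (G.t e)) (e : G.E) :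
    (mkF G fo fe).map (ed e).toPath = fe e := by
  rw [mkF_map]; exact (Category.id_comp _).trans (Category.comp_id _)

lemma of_map_eq_toPath {V : Type*} [Quiver.{0} V] {a b : V} (f : a ⟶ b) :
    ((Paths.of _).map f) = f.toPath := rfl

/-- extensionality for functors out of a path category, via canonical edges -/
lemma functor_ext {G : DiGraph} {C : Type*} [Category C] {F₁ F₂ : G.PathCat ⥤ C}
    (hobj : F₁.obj = F₂.obj)
    (hmap : ∀ e : G.E, F₁.map (ed e).toPath =
      eqToHom (congrFun hobj _) ≫ F₂.map (ed e).toPath ≫ eqToHom (congrFun hobj.symm _)) :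
    F₁ = F₂ := by
  apply Paths.ext_functor hobj
  rintro a b ⟨e, h1, h2⟩
  subst h1; subst h2
  exact hmap e

lemma CompOf.single {P : ∀ G H : DiGraph, (G.PathCat ⥤ H.PathCat) → Prop}
    {G H : DiGraph} {F : G.PathCat ⥤ H.PathCat} (h : P G H F) (hH : IsCausalNet H) :
    CompOf P G H F := by
  have := CompOf.comp h hH (CompOf.id H)
  rwa [Functor.comp_id] at this

lemma CompOf.trans {P : ∀ G H : DiGraph, (G.PathCat ⥤ H.PathCat) → Prop}
    {G G' G'' : DiGraph} {F : G.PathCat ⥤ G'.PathCat} {F' : G'.PathCat ⥤ G''.PathCat}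
    (h : CompOf P G G' F) (h' : CompOf P G' G'' F') : CompOf P G G'' (F ⋙ F') := by
  induction h with
  | id G => rwa [Functor.id_comp]
  | comp h1 hc _ ih =>
      rw [Functor.assoc]
      exact CompOf.comp h1 hc (ih h')

lemma CompOf.mono {P Q : ∀ G H : DiGraph, (G.PathCat ⥤ H.PathCat) → Prop}
    (hPQ : ∀ G H F, P G H F → Q G H F)
    {G H : DiGraph} {F : G.PathCat ⥤ H.PathCat}
    (h : CompOf P G H F) : CompOf Q G H F := by
  induction h with
  | id G => exact CompOf.id G
  | comp h1 hc _ ih => exact CompOf.comp (hPQ _ _ _ h1) hc ih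

/-- reachability by a nonempty path -/
def Reach (G : DiGraph) (a b : G.V) : Prop := ∃ p : Quiver.Path a b, p.length ≠ 0

lemma Reach.trans {G : DiGraph} {a b c : G.V} (h : Reach G a b) (h' : Reach G b c) :
    Reach G a c := by
  obtain ⟨p, hp⟩ := h; obtain ⟨q, hq⟩ := h'
  exact ⟨p.comp q, by rw [Quiver.Path.length_comp]; omega⟩

lemma Reach.irrefl {G : DiGraph} (hG : G.Acyclic) (a : G.V) : ¬ Reach G a a := by
  rintro ⟨p, hp⟩; exact hp (hG a p)

lemma Reach.of_ed {G : DiGraph} (e : G.E) : Reach G (G.s e) (G.t e) :=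
  ⟨(ed e).toPath, by simp [Quiver.Hom.toPath]⟩

lemma acyclic_of_rel {G : DiGraph} (r : G.V → G.V → Prop)
    (hirr : ∀ a, ¬ r a a) (htr : ∀ {a b c}, r a b → r b c → r a c)
    (hedge : ∀ e : G.E, r (G.s e) (G.t e)) : G.Acyclic := by
  have key : ∀ {a b : G.V} (p : Quiver.Path a b), p.length ≠ 0 → r a b := by
    intro a b p
    induction p with
    | nil => simp
    | cons q ε ih =>
        rintro -
        obtain ⟨e, h1, h2⟩ := ε
        have he : r _ _ := hedge e
        rw [h1, h2] at he
        by_cases hq : q.length = 0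
        · obtain rfl := q.eq_of_length_zero hq
          exact he
        · exact htr (ih hq) he
  intro a p
  by_contra h
  exact hirr a (key p h)

/-- lexicographic-style acyclicity criterion -/
lemma acyclic_lex {G : DiGraph} {α β : Type*} (fo : G.V → α) (snd : G.V → β)
    (R : α → α → Prop) (Q : β → β → Prop)
    (hRt : ∀ {x y z}, R x y → R y z → R x z) (hRi : ∀ x, ¬ R x x)
    (hQt : ∀ {x y z}, Q x y → Q y z → Q x z) (hQi : ∀ x, ¬ Q x x)
    (hedge : ∀ e : G.E, R (fo (G.s e)) (fo (G.t e)) ∨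
      (fo (G.s e) = fo (G.t e) ∧ Q (snd (G.s e)) (snd (G.t e)))) : G.Acyclic := by
  apply acyclic_of_rel (fun a b => R (fo a) (fo b) ∨ (fo a = fo b ∧ Q (snd a) (snd b)))
  · rintro a (h | ⟨-, h⟩)
    · exact hRi _ h
    · exact hQi _ h
  · rintro a b c (h | ⟨h, hq⟩) (h' | ⟨h', hq'⟩)
    · exact Or.inl (hRt h h')
    · exact Or.inl (h' ▸ h)
    · exact Or.inl (h ▸ h')
    · exact Or.inr ⟨h.trans h', hQt hq hq'⟩
  · exact hedge

lemma endpoints_eq_of_length_zero {W : Type*} [Quiver.{0} W] {a b : W} (p : Quiver.Path a b)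
    (h : p.length = 0) : a = b := p.eq_of_length_zero h

lemma path_eq_eqToHom {W : Type*} [Quiver.{0} W] {a b : Paths W} (p : a ⟶ b) (h : a = b)
    (hl : Quiver.Path.length p = 0) : p = eqToHom h := by
  subst h
  rw [Quiver.Path.eq_nil_of_length_zero p hl]
  rfl

lemma exists_edge_of_length_one {W : Type*} [Quiver.{0} W] {a b : W}
    (p : Quiver.Path a b) (h : p.length = 1) : ∃ l : a ⟶ b, p = l.toPath := by
  obtain ⟨c, f, q, hq, rfl⟩ := p.eq_toPath_comp_of_length_eq_succ h
  obtain rfl := q.eq_of_length_zero hq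
  obtain rfl := q.eq_nil_of_length_zero hq
  exact ⟨f, rfl⟩

end Decomp
namespace Decomp
open Quiver

/-- the graph obtained by subdividing the edge `e₀` -/
def subdivG (G : DiGraph) (e₀ : G.E) : DiGraph where
  V := G.V ⊕ Unit
  E := {e : G.E // e ≠ e₀} ⊕ Bool
  s := fun ε => match ε with
    | .inl e => .inl (G.s e.1)
    | .inr false => .inl (G.s e₀)
    | .inr true => .inr ()
  t := fun ε => match ε with
    | .inl e => .inl (G.t e.1)
    | .inr false => .inr ()
    | .inr true => .inl (G.t e₀)

lemma subdivPrefunctor_map_self {G H : DiGraph} (e₀ : G.E)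
    (vMap : G.V → H.V) (x : H.V) (eMap : { e : G.E // e ≠ e₀ } → H.E)
    (e₁ e₂ : H.E)
    (hs : ∀ e, H.s (eMap e) = vMap (G.s e.1))
    (ht : ∀ e, H.t (eMap e) = vMap (G.t e.1))
    (hs1 : H.s e₁ = vMap (G.s e₀)) (ht1 : H.t e₁ = x)
    (hs2 : H.s e₂ = x) (ht2 : H.t e₂ = vMap (G.t e₀)) :
    (subdivPrefunctor e₀ vMap x eMap e₁ e₂ hs ht hs1 ht1 hs2 ht2).map (ed e₀) =
      (Quiver.Hom.toPath (⟨e₁, hs1, ht1⟩ : @Quiver.Hom H.V _ (vMap (G.s e₀)) x)) ≫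
        (Quiver.Hom.toPath (⟨e₂, hs2, ht2⟩ : @Quiver.Hom H.V _ x (vMap (G.t e₀)))) := by
  classical
  delta subdivPrefunctor
  dsimp only
  rw [dif_pos (show (ed e₀).1 = e₀ from rfl)]
  rfl

lemma subdivPrefunctor_map_ne {G H : DiGraph} (e₀ : G.E)
    (vMap : G.V → H.V) (x : H.V) (eMap : { e : G.E // e ≠ e₀ } → H.E)
    (e₁ e₂ : H.E)
    (hs : ∀ e, H.s (eMap e) = vMap (G.s e.1))
    (ht : ∀ e, H.t (eMap e) = vMap (G.t e.1))
    (hs1 : H.s e₁ = vMap (G.s e₀)) (ht1 : H.t e₁ = x)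
    (hs2 : H.s e₂ = x) (ht2 : H.t e₂ = vMap (G.t e₀))
    {e : G.E} (he : e ≠ e₀) :
    (subdivPrefunctor e₀ vMap x eMap e₁ e₂ hs ht hs1 ht1 hs2 ht2).map (ed e) =
      (Quiver.Hom.toPath
        (⟨eMap ⟨e, he⟩, hs ⟨e, he⟩, ht ⟨e, he⟩⟩ :
          @Quiver.Hom H.V _ (vMap (G.s e)) (vMap (G.t e)))) := by
  classical
  delta subdivPrefunctor
  dsimp only
  rw [dif_neg (show ¬((ed e).1 = e₀) from he)]
  rfl

section Stage1
variable (φ : DiGraph)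

lemma stage1 (hφ : IsCausalNet φ) :
    ∀ (n : ℕ) (G : DiGraph), IsCausalNet G → ∀ (g : G.PathCat ⥤ φ.PathCat),
    (∑ᶠ e : G.E, (Quiver.Path.length (g.map (ed e).toPath) - 1)) ≤ n →
    ∃ (G₁ : DiGraph) (F₁ : G.PathCat ⥤ G₁.PathCat) (g₁ : G₁.PathCat ⥤ φ.PathCat),
      IsCausalNet G₁ ∧ CompOf IsSubdivision G G₁ F₁ ∧
      (∀ e : G₁.E, Quiver.Path.length (g₁.map (ed e).toPath) ≤ 1) ∧ g = F₁ ⋙ g₁ := by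
  intro n
  induction n with
  | zero =>
      intro G hG g hle
      refine ⟨G, Functor.id _, g, hG, CompOf.id G, ?_, (Functor.id_comp g).symm⟩
      intro e
      by_contra hlen
      push_neg at hlen
      haveI : Fintype G.E := @Fintype.ofFinite _ hG.2.2
      rw [finsum_eq_sum_of_fintype] at hle
      have h2 := Finset.single_le_sum
        (f := fun e : G.E => Quiver.Path.length (g.map (ed e).toPath) - 1)
        (fun _ _ => Nat.zero_le _) (Finset.mem_univ e)
      omega
  | succ n ih =>
      intro G hG g hle
      by_cases hdone : ∀ e : G.E, Quiver.Path.length (g.map (ed e).toPath) ≤ 1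
      · exact ⟨G, Functor.id _, g, hG, CompOf.id G, hdone, (Functor.id_comp g).symm⟩
      push_neg at hdone
      obtain ⟨e₀, he₀⟩ := hdone
      -- split off the first edge of the image of e₀
      obtain ⟨c, l, q, hq, hp⟩ :=
        (g.map (ed e₀).toPath).eq_toPath_comp_of_length_eq_succ
          (n := Quiver.Path.length (g.map (ed e₀).toPath) - 1) (by omega)
      -- the subdivided graph
      set G₁ : DiGraph := subdivG G e₀ with hG₁
      haveI : Finite G.V := hG.2.1
      haveI : Finite G.E := hG.2.2
      have hG₁acyc : G₁.Acyclic := by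
        apply acyclic_lex (G := G₁)
          (fo := Sum.elim (fun v => v) (fun _ => G.s e₀))
          (snd := Sum.elim (fun _ => (0 : ℕ)) (fun _ => 1))
          (R := Reach G) (Q := (· < ·))
          (fun h h' => h.trans h') (Reach.irrefl hG.1) (fun h h' => h.trans h')
          (fun x => lt_irrefl x)
        rintro (e | b)
        · exact Or.inl (Reach.of_ed e.1)
        · cases b
          · exact Or.inr ⟨rfl, Nat.zero_lt_one⟩
          · exact Or.inl (Reach.of_ed e₀)
      haveI : Finite {e : G.E // e ≠ e₀} := Subtype.finite
      have hG₁net : IsCausalNet G₁ :=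
        ⟨hG₁acyc, inferInstanceAs (Finite (G.V ⊕ Unit)),
          inferInstanceAs (Finite ({e : G.E // e ≠ e₀} ⊕ Bool))⟩
      -- the subdivision functor
      set F₁ : G.PathCat ⥤ G₁.PathCat :=
        Paths.lift (subdivPrefunctor (H := G₁) e₀ Sum.inl (Sum.inr ()) Sum.inl
          (Sum.inr false) (Sum.inr true)
          (fun _ => rfl) (fun _ => rfl) rfl rfl rfl rfl) with hF₁
      have hsub : IsSubdivision G G₁ F₁ := by
        refine ⟨e₀, Sum.inl, Sum.inr (), Sum.inl, Sum.inr false, Sum.inr true,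
          (fun _ => rfl), (fun _ => rfl), rfl, rfl, rfl, rfl,
          Sum.inl_injective, by rintro ⟨_, ⟨⟩⟩, ?_, Sum.inl_injective,
          (by intro h; exact Bool.noConfusion (Sum.inr_injective h)), by rintro ⟨_, ⟨⟩⟩, by rintro ⟨_, ⟨⟩⟩,
          ?_, hF₁⟩
        · rintro (v | ⟨⟩)
          · exact Or.inr ⟨v, rfl⟩
          · exact Or.inl rfl
        · rintro (e | b)
          · exact Or.inr (Or.inr ⟨e, rfl⟩)
          · cases b
            · exact Or.inl rfl
            · exact Or.inr (Or.inl rfl)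
      -- the remaining functor
      set fo : G₁.V → φ.PathCat := Sum.elim (fun v => g.obj v) (fun _ => c) with hfo
      set fe : ∀ ε : G₁.E, fo (G₁.s ε) ⟶ fo (G₁.t ε) := fun ε =>
        match ε with
        | .inl e => g.map (ed e.1).toPath
        | .inr false => l.toPath
        | .inr true => q with hfe
      set g₁ : G₁.PathCat ⥤ φ.PathCat := mkF G₁ fo fe with hg₁
      have hlen₁ : ∀ ε : G₁.E, Quiver.Path.length (g₁.map (ed ε).toPath) =
          Quiver.Path.length (fe ε) := by
        intro ε; rw [hg₁, mkF_ed]; rfl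
      have hfac : g = F₁ ⋙ g₁ := by
        refine functor_ext (F₁ := g) (F₂ := F₁ ⋙ g₁) rfl ?_
        intro e
        erw [eqToHom_refl, eqToHom_refl, Category.id_comp, Category.comp_id]
        show g.map (ed e).toPath = g₁.map (F₁.map (ed e).toPath)
        rw [show F₁.map (ed e).toPath = (subdivPrefunctor (H := G₁) e₀ Sum.inl (Sum.inr ()) Sum.inl
          (Sum.inr false) (Sum.inr true)
          (fun _ => rfl) (fun _ => rfl) rfl rfl rfl rfl).map (ed e) from Paths.lift_toPath _ _]
        by_cases he : e = e₀
        · subst he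
          erw [subdivPrefunctor_map_self, Functor.map_comp]
          erw [mkF_map, mkF_map]
          refine hp.trans ?_
          erw [eqToHom_refl, eqToHom_refl, eqToHom_refl, Category.id_comp, Category.comp_id, Category.id_comp, Category.comp_id]
          rfl
        · erw [subdivPrefunctor_map_ne (he := he)]
          erw [mkF_map]
          exact ((Category.id_comp _).trans (Category.comp_id _)).symm
      -- measure decreases
      haveI : Fintype G.E := Fintype.ofFinite _
      letI fsub : Fintype {e : G.E // e ≠ e₀} := Fintype.ofFinite _
      letI : Fintype G₁.E := @instFintypeSum _ _ fsub Bool.fintype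
      have hexc : (∑ᶠ ε : G₁.E, (Quiver.Path.length (g₁.map (ed ε).toPath) - 1)) ≤ n := by
        rw [finsum_eq_sum_of_fintype] at hle ⊢
        have hsum1 : (∑ ε : G₁.E, (Quiver.Path.length (g₁.map (ed ε).toPath) - 1)) =
            (∑ e : {e : G.E // e ≠ e₀},
              (Quiver.Path.length (g₁.map (ed (Sum.inl e : G₁.E)).toPath) - 1)) +
            (∑ b : Bool,
              (Quiver.Path.length (g₁.map (ed (Sum.inr b : G₁.E)).toPath) - 1)) :=
          Fintype.sum_sum_type _
        have h3 : (∑ e : {e : G.E // e ≠ e₀},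
              (Quiver.Path.length (g₁.map (ed (Sum.inl e : G₁.E)).toPath) - 1)) =
            ∑ e : {e : G.E // e ≠ e₀},
              (Quiver.Path.length (g.map (ed e.1).toPath) - 1) :=
          Finset.sum_congr rfl (fun e _ => by exact congrArg (· - 1) (hlen₁ (Sum.inl e)))
        have hbool : (∑ b : Bool,
              (Quiver.Path.length (g₁.map (ed (Sum.inr b : G₁.E)).toPath) - 1)) =
            (Quiver.Path.length (g₁.map (ed (Sum.inr true : G₁.E)).toPath) - 1) +
            (Quiver.Path.length (g₁.map (ed (Sum.inr false : G₁.E)).toPath) - 1) :=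
          Fintype.sum_bool _
        have htrue : Quiver.Path.length (g₁.map (ed (Sum.inr true : G₁.E)).toPath)
            = q.length := by exact hlen₁ (Sum.inr true)
        have hfalse : Quiver.Path.length (g₁.map (ed (Sum.inr false : G₁.E)).toPath)
            = 1 := by exact (hlen₁ (Sum.inr false)).trans rfl
        have hsplit : ∑ e : G.E, (Quiver.Path.length (g.map (ed e).toPath) - 1) =
            (∑ e : {e : G.E // e ≠ e₀},
              (Quiver.Path.length (g.map (ed e.1).toPath) - 1)) +
            (Quiver.Path.length (g.map (ed e₀).toPath) - 1) := by
          classical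
          have hst : (∑ x ∈ Finset.univ.erase e₀,
              (Quiver.Path.length (g.map (ed x).toPath) - 1)) =
              ∑ e : {e : G.E // e ≠ e₀},
                (Quiver.Path.length (g.map (ed e.1).toPath) - 1) :=
            Finset.sum_subtype _ (fun x => by simp) _
          rw [← Finset.sum_erase_add _ _ (Finset.mem_univ e₀), hst]
        rw [hsum1, h3, hbool, htrue, hfalse]
        omega
      obtain ⟨G₂, F', g₂, hnet₂, hcomp₂, hlen₂, hfac₂⟩ := ih G₁ hG₁net g₁ hexc
      refine ⟨G₂, F₁ ⋙ F', g₂, hnet₂, CompOf.comp hsub hG₁net hcomp₂, hlen₂, ?_⟩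
      rw [hfac, hfac₂, Functor.assoc]

end Stage1
end Decomp
namespace Decomp
open Quiver

open Classical in
/-- the graph obtained by shrinking the induced subgraph on `S` to a point -/
noncomputable def coarseG (G : DiGraph) (S : Set G.V) : DiGraph where
  V := {v : G.V // v ∉ S} ⊕ Unit
  E := {e : G.E // ¬(G.s e ∈ S ∧ G.t e ∈ S)}
  s := fun ε => if h : G.s ε.1 ∈ S then Sum.inr () else Sum.inl ⟨_, h⟩
  t := fun ε => if h : G.t ε.1 ∈ S then Sum.inr () else Sum.inl ⟨_, h⟩

open Classical in
noncomputable def collapseMap (G : DiGraph) (S : Set G.V) (v : G.V) : (coarseG G S).V :=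
  if h : v ∈ S then Sum.inr () else Sum.inl ⟨v, h⟩

lemma collapseV_eq (G : DiGraph) (S : Set G.V) :
    collapseV (H := coarseG G S) S (Sum.inr ()) Sum.inl = collapseMap G S := rfl

lemma length_eqToHom {W : Type*} [Quiver.{0} W] {a b : Paths W} (h : a = b) :
    Quiver.Path.length (eqToHom h : a ⟶ b) = 0 := by subst h; rfl

lemma length_sandwich {W : Type*} [Quiver.{0} W] {a b c d : Paths W} (h : a = b)
    (p : b ⟶ c) (h' : c = d) :
    Quiver.Path.length (eqToHom h ≫ p ≫ eqToHom h') = Quiver.Path.length p := by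
  subst h; subst h'
  rw [eqToHom_refl, eqToHom_refl, Category.id_comp, Category.comp_id]

lemma sandwich_aux {C : Type*} [Category C] {X Y Z W P Q : C} (f : X ⟶ Y) (h1 : X = Z)
    (h2 : Z = W) (h3 : W = X) (h4 : Y = P) (h5 : P = Q) (h6 : Q = Y) :
    f = eqToHom h1 ≫ (eqToHom h2 ≫ eqToHom h3 ≫ f ≫ eqToHom h4 ≫ eqToHom h5) ≫ eqToHom h6 := by
  subst h1 h2 h4 h5
  simp

lemma vertexCoarsePrefunctor_map_pos {G H : DiGraph} (S : Set G.V)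
    (x : H.V) (vMap : { v : G.V // v ∉ S } → H.V)
    (eMap : { e : G.E // ¬(G.s e ∈ S ∧ G.t e ∈ S) } → H.E)
    (hs : ∀ e, H.s (eMap e) = collapseV S x vMap (G.s e.1))
    (ht : ∀ e, H.t (eMap e) = collapseV S x vMap (G.t e.1))
    {e : G.E} (h : G.s e ∈ S ∧ G.t e ∈ S) :
    (vertexCoarsePrefunctor S x vMap eMap hs ht).map (ed e) =
      eqToHom (show ((Paths.of _).obj (collapseV S x vMap (G.s e)) : Paths H.V)
          = (Paths.of _).obj (collapseV S x vMap (G.t e)) by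
        show collapseV S x vMap (G.s e) = collapseV S x vMap (G.t e)
        unfold collapseV
        rw [dif_pos h.1, dif_pos h.2]) := by
  classical
  delta vertexCoarsePrefunctor
  dsimp only
  rw [dif_pos (show G.s (ed e).1 ∈ S ∧ G.t (ed e).1 ∈ S from h)]

lemma vertexCoarsePrefunctor_map_neg {G H : DiGraph} (S : Set G.V)
    (x : H.V) (vMap : { v : G.V // v ∉ S } → H.V)
    (eMap : { e : G.E // ¬(G.s e ∈ S ∧ G.t e ∈ S) } → H.E)
    (hs : ∀ e, H.s (eMap e) = collapseV S x vMap (G.s e.1))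
    (ht : ∀ e, H.t (eMap e) = collapseV S x vMap (G.t e.1))
    {e : G.E} (h : ¬(G.s e ∈ S ∧ G.t e ∈ S)) :
    (vertexCoarsePrefunctor S x vMap eMap hs ht).map (ed e) =
      Quiver.Hom.toPath
        (⟨eMap ⟨e, h⟩, hs ⟨e, h⟩, ht ⟨e, h⟩⟩ :
          @Quiver.Hom H.V _ (collapseV S x vMap (G.s e)) (collapseV S x vMap (G.t e))) := by
  classical
  delta vertexCoarsePrefunctor
  dsimp only
  rw [dif_neg (show ¬(G.s (ed e).1 ∈ S ∧ G.t (ed e).1 ∈ S) from h)]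
  rfl

section Stage2
variable (φ : DiGraph)

lemma stage2 (hφ : IsCausalNet φ) :
    ∀ (n : ℕ) (G : DiGraph), IsCausalNet G → ∀ (g : G.PathCat ⥤ φ.PathCat),
    (∀ e : G.E, Quiver.Path.length (g.map (ed e).toPath) ≤ 1) → Nat.card G.V ≤ n →
    ∃ (G₂ : DiGraph) (F₂ : G.PathCat ⥤ G₂.PathCat) (g₂ : G₂.PathCat ⥤ φ.PathCat),
      IsCausalNet G₂ ∧ CompOf IsVertexCoarse G G₂ F₂ ∧
      (∀ e : G₂.E, Quiver.Path.length (g₂.map (ed e).toPath) ≤ 1) ∧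
      Function.Injective (fun v : G₂.V => (g₂.obj v : φ.V)) ∧ g = F₂ ⋙ g₂ := by
  intro n
  induction n with
  | zero =>
      intro G hG g hlen hcard
      haveI : Finite G.V := hG.2.1
      haveI hemp : IsEmpty G.V := by
        by_contra h
        rw [not_isEmpty_iff] at h
        have := Nat.card_pos (α := G.V)
        omega
      exact ⟨G, Functor.id _, g, hG, CompOf.id G, hlen,
        fun _ _ _ => Subsingleton.elim _ _, (Functor.id_comp g).symm⟩
  | succ n ih =>
      intro G hG g hlen hcard
      haveI : Finite G.V := hG.2.1
      haveI : Finite G.E := hG.2.2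
      by_cases hinj : Function.Injective (fun v : G.V => (g.obj v : φ.V))
      · exact ⟨G, Functor.id _, g, hG, CompOf.id G, hlen, hinj, (Functor.id_comp g).symm⟩
      -- pick a collapsing class
      simp only [Function.Injective, not_forall] at hinj
      obtain ⟨u, v, huv, hne⟩ := hinj
      set S : Set G.V := {w | g.obj w = g.obj u} with hS
      have huS : u ∈ S := rfl
      have hvS : v ∈ S := huv.symm
      -- no nontrivial loops in φ
      have keylen : ∀ e : G.E, (g.obj (G.s e) : φ.V) = g.obj (G.t e) →
          Quiver.Path.length (g.map (ed e).toPath) = 0 := by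
        intro e hee
        by_contra hl
        have hr : Reach φ (g.obj (G.s e)) (g.obj (G.t e)) := ⟨g.map (ed e).toPath, hl⟩
        rw [hee] at hr
        exact Reach.irrefl hφ.1 _ hr
      have hSmem : ∀ e : G.E, (G.s e ∈ S ↔ G.t e ∈ S) ∨
          ¬ (g.obj (G.s e) : φ.V) = g.obj (G.t e) := by
        intro e
        by_cases hee : (g.obj (G.s e) : φ.V) = g.obj (G.t e)
        · left
          constructor
          · intro h; exact (hee.symm.trans h : _)
          · intro h; exact (hee.trans h : _)
        · exact Or.inr hee
      set G₂ : DiGraph := coarseG G S with hG₂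
      set ν : G.V → G₂.V := collapseMap G S with hν
      have hsν : ∀ ε : G₂.E, G₂.s ε = ν (G.s ε.1) := fun _ => rfl
      have htν : ∀ ε : G₂.E, G₂.t ε = ν (G.t ε.1) := fun _ => rfl
      set fo : G₂.V → φ.PathCat :=
        Sum.elim (fun w => g.obj w.1) (fun _ => g.obj u) with hfo
      have hfoν : ∀ w : G.V, fo (ν w) = g.obj w := by
        intro w
        by_cases h : w ∈ S
        · rw [hν, show collapseMap G S w = Sum.inr () from dif_pos h]
          exact (h : g.obj w = g.obj u).symm
        · rw [hν, show collapseMap G S w = Sum.inl ⟨w, h⟩ from dif_neg h]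
          rfl
      set fe : ∀ ε : G₂.E, fo (G₂.s ε) ⟶ fo (G₂.t ε) := fun ε =>
        eqToHom (hfoν (G.s ε.1)) ≫ g.map (ed ε.1).toPath ≫ eqToHom (hfoν (G.t ε.1)).symm
        with hfe
      set g₂ : G₂.PathCat ⥤ φ.PathCat := mkF G₂ fo fe with hg₂
      have hlen₂ : ∀ ε : G₂.E, Quiver.Path.length (g₂.map (ed ε).toPath) =
          Quiver.Path.length (g.map (ed ε.1).toPath) := by
        intro ε
        rw [hg₂, mkF_ed, hfe]
        exact length_sandwich _ _ _
      -- acyclicity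
      have hG₂acyc : G₂.Acyclic := by
        apply acyclic_lex (G := G₂)
          (fo := fun w => (fo w : φ.V))
          (snd := Sum.elim (fun w => w.1) (fun _ => u))
          (R := Reach φ) (Q := Reach G)
          (fun h h' => h.trans h') (Reach.irrefl hφ.1)
          (fun h h' => h.trans h') (Reach.irrefl hG.1)
        intro ε
        by_cases hl : Quiver.Path.length (g.map (ed ε.1).toPath) = 0
        · right
          have hee : (g.obj (G.s ε.1) : φ.V) = g.obj (G.t ε.1) :=
            endpoints_eq_of_length_zero (W := φ.V) _ hl
          have hsS : G.s ε.1 ∉ S := by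
            intro h
            rcases hSmem ε.1 with h' | h'
            · exact ε.2 ⟨h, h'.1 h⟩
            · exact h' hee
          have htS : G.t ε.1 ∉ S := by
            intro h
            rcases hSmem ε.1 with h' | h'
            · exact ε.2 ⟨h'.2 h, h⟩
            · exact h' hee
          constructor
          · rw [hsν, htν, hfoν, hfoν]; exact hee
          · rw [hsν, htν, hν,
              show collapseMap G S (G.s ε.1) = Sum.inl ⟨_, hsS⟩ from dif_neg hsS,
              show collapseMap G S (G.t ε.1) = Sum.inl ⟨_, htS⟩ from dif_neg htS]
            exact Reach.of_ed ε.1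
        · left
          have : Reach φ (g.obj (G.s ε.1)) (g.obj (G.t ε.1)) := ⟨g.map (ed ε.1).toPath, hl⟩
          rw [hsν, htν, hfoν, hfoν]
          exact this
      haveI : Finite {v : G.V // v ∉ S} := Subtype.finite
      have hG₂net : IsCausalNet G₂ :=
        ⟨hG₂acyc, inferInstanceAs (Finite ({v : G.V // v ∉ S} ⊕ Unit)),
          inferInstanceAs (Finite {e : G.E // ¬(G.s e ∈ S ∧ G.t e ∈ S)})⟩
      -- the coarse-graining functor
      set F₂ : G.PathCat ⥤ G₂.PathCat :=
        Paths.lift (vertexCoarsePrefunctor (H := G₂) S (Sum.inr ()) Sum.inl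
          (fun e => e) (fun _ => rfl) (fun _ => rfl)) with hF₂
      have hvc : IsVertexCoarse G G₂ F₂ := by
        refine ⟨S, Sum.inr (), Sum.inl, (fun e => e), (fun _ => rfl), (fun _ => rfl),
          Sum.inl_injective, by rintro ⟨_, ⟨⟩⟩, ?_, Function.bijective_id, hF₂⟩
        rintro (w | ⟨⟩)
        · exact Or.inr ⟨w, rfl⟩
        · exact Or.inl rfl
      -- the factorization
      have hfac : g = F₂ ⋙ g₂ := by
        refine functor_ext (F₁ := g) (F₂ := F₂ ⋙ g₂)
          (funext fun w => (hfoν w).symm) ?_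
        intro e
        show _ = eqToHom _ ≫ g₂.map (F₂.map (ed e).toPath) ≫ eqToHom _
        rw [show F₂.map (ed e).toPath = (vertexCoarsePrefunctor (H := G₂) S (Sum.inr ())
          Sum.inl (fun e => e) (fun _ => rfl) (fun _ => rfl)).map (ed e)
          from Paths.lift_toPath _ _]
        by_cases h : G.s e ∈ S ∧ G.t e ∈ S
        · erw [vertexCoarsePrefunctor_map_pos (h := h)]
          have h0 : Quiver.Path.length (g.map (ed e).toPath) = 0 := by
            apply keylen
            exact ((h.1 : g.obj (G.s e) = g.obj u).trans (h.2 : g.obj (G.t e) = g.obj u).symm)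
          erw [eqToHom_map, path_eq_eqToHom (g.map (ed e).toPath)
            (endpoints_eq_of_length_zero (W := φ.V) _ h0) h0]
          simp [eqToHom_trans]
        · erw [vertexCoarsePrefunctor_map_neg (h := h)]
          erw [mkF_map]
          rw [hfe]
          simp only [eqToHom_trans_assoc, Category.assoc, eqToHom_trans,
            eqToHom_refl, Category.id_comp, Category.comp_id]
          exact sandwich_aux _ _ _ _ _ _ _
      -- measure decreases
      have hcard₂ : Nat.card G₂.V ≤ n := by
        haveI : Fintype G.V := Fintype.ofFinite _
        letI : Fintype {v : G.V // v ∉ S} := Fintype.ofFinite _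
        letI instV₂ : Fintype G₂.V := @instFintypeSum _ _ _ _
        set ι : G₂.V → G.V := Sum.elim (fun w => w.1) (fun _ => u) with hι
        have hιinj : Function.Injective ι := by
          rintro (a | ⟨⟩) (b | ⟨⟩) hab <;>
            simp only [hι, Sum.elim_inl, Sum.elim_inr] at hab
          · exact congrArg Sum.inl (Subtype.ext hab)
          · exact absurd (show a.1 ∈ S by rw [hab]; exact huS) a.2
          · exact absurd (show b.1 ∈ S by rw [← hab]; exact huS) b.2
          · rfl
        have hv' : v ∉ Set.range ι := by
          rintro ⟨(a | ⟨⟩), rfl⟩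
          · exact a.2 hvS
          · exact hne rfl
        have hlt : Fintype.card G₂.V < Fintype.card G.V :=
          Fintype.card_lt_of_injective_of_notMem ι hιinj hv'
        have e1 : Nat.card G₂.V = Fintype.card G₂.V := Nat.card_eq_fintype_card
        have e2 : Nat.card G.V = Fintype.card G.V := Nat.card_eq_fintype_card
        omega
      have hlen₂' : ∀ ε : G₂.E, Quiver.Path.length (g₂.map (ed ε).toPath) ≤ 1 := by
        intro ε; rw [hlen₂]; exact hlen ε.1
      obtain ⟨G₃, F', g₃, hnet₃, hcomp₃, hlen₃, hinj₃, hfac₃⟩ := ih G₂ hG₂net g₂ hlen₂' hcard₂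
      refine ⟨G₃, F₂ ⋙ F', g₃, hnet₃, CompOf.comp hvc hG₂net hcomp₃, hlen₃, hinj₃, ?_⟩
      rw [hfac, hfac₃, Functor.assoc]

end Stage2
end Decomp
namespace Decomp
open Quiver

/-- the graph obtained by merging the edges in `Sm` into one edge `a ⟶ b` -/
def edgeCoarseG (G : DiGraph) (Sm : Set G.E) (a b : G.V) : DiGraph where
  V := G.V
  E := {e : G.E // e ∉ Sm} ⊕ Unit
  s := fun ε => match ε with | .inl e => G.s e.1 | .inr _ => a
  t := fun ε => match ε with | .inl e => G.t e.1 | .inr _ => b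

lemma toPath_congr {H : DiGraph} {a a' b b' : Paths H.V}
    (ha : a = a') (hb : b' = b)
    (l : @Quiver.Hom H.V _ a b) (l' : @Quiver.Hom H.V _ a' b')
    (hl : l.1 = l'.1) :
    (Quiver.Hom.toPath l : a ⟶ b) =
      eqToHom ha ≫ (Quiver.Hom.toPath l' : a' ⟶ b') ≫ eqToHom hb := by
  subst ha; subst hb
  obtain rfl : l = l' := Subtype.ext hl
  rw [eqToHom_refl, eqToHom_refl, Category.id_comp, Category.comp_id]

lemma edgeCoarsePrefunctor_map_pos {G H : DiGraph} (Sm : Set G.E)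
    (vMap : G.V → H.V) (eMap : { e : G.E // e ∉ Sm } → H.E) (em : H.E)
    (a b : G.V) (hcom : ∀ e ∈ Sm, G.s e = a ∧ G.t e = b)
    (hs : ∀ e, H.s (eMap e) = vMap (G.s e.1))
    (ht : ∀ e, H.t (eMap e) = vMap (G.t e.1))
    (hsm : H.s em = vMap a) (htm : H.t em = vMap b)
    {e : G.E} (h : e ∈ Sm) :
    (edgeCoarsePrefunctor Sm vMap eMap em a b hcom hs ht hsm htm).map (ed e) =
      Quiver.Hom.toPath
        (⟨em, by rw [hsm, ← (hcom e h).1], by rw [htm, ← (hcom e h).2]⟩ :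
          @Quiver.Hom H.V _ (vMap (G.s e)) (vMap (G.t e))) := by
  classical
  delta edgeCoarsePrefunctor
  dsimp only
  rw [dif_pos (show (ed e).1 ∈ Sm from h)]
  rfl

lemma edgeCoarsePrefunctor_map_neg {G H : DiGraph} (Sm : Set G.E)
    (vMap : G.V → H.V) (eMap : { e : G.E // e ∉ Sm } → H.E) (em : H.E)
    (a b : G.V) (hcom : ∀ e ∈ Sm, G.s e = a ∧ G.t e = b)
    (hs : ∀ e, H.s (eMap e) = vMap (G.s e.1))
    (ht : ∀ e, H.t (eMap e) = vMap (G.t e.1))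
    (hsm : H.s em = vMap a) (htm : H.t em = vMap b)
    {e : G.E} (h : e ∉ Sm) :
    (edgeCoarsePrefunctor Sm vMap eMap em a b hcom hs ht hsm htm).map (ed e) =
      Quiver.Hom.toPath
        (⟨eMap ⟨e, h⟩, hs ⟨e, h⟩, ht ⟨e, h⟩⟩ :
          @Quiver.Hom H.V _ (vMap (G.s e)) (vMap (G.t e))) := by
  classical
  delta edgeCoarsePrefunctor
  dsimp only
  rw [dif_neg (show ¬((ed e).1 ∈ Sm) from h)]
  rfl

section Stage3
variable (φ : DiGraph)

lemma stage3 (hφ : IsCausalNet φ) :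
    ∀ (n : ℕ) (G : DiGraph), IsCausalNet G → ∀ (g : G.PathCat ⥤ φ.PathCat)
    (eφ : G.E → φ.E)
    (hs' : ∀ e, φ.s (eφ e) = g.obj (G.s e)) (ht' : ∀ e, φ.t (eφ e) = g.obj (G.t e)),
    (∀ e, g.map (ed e).toPath = Quiver.Hom.toPath
      (⟨eφ e, hs' e, ht' e⟩ : @Quiver.Hom φ.V _ (g.obj (G.s e)) (g.obj (G.t e)))) →
    Function.Injective (fun v : G.V => (g.obj v : φ.V)) → Nat.card G.E ≤ n →
    ∃ (G₃ : DiGraph) (F₃ : G.PathCat ⥤ G₃.PathCat) (g₃ : G₃.PathCat ⥤ φ.PathCat)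
      (eφ₃ : G₃.E → φ.E)
      (hs₃ : ∀ e, φ.s (eφ₃ e) = g₃.obj (G₃.s e))
      (ht₃ : ∀ e, φ.t (eφ₃ e) = g₃.obj (G₃.t e)),
      IsCausalNet G₃ ∧ CompOf IsEdgeCoarse G G₃ F₃ ∧
      (∀ e, g₃.map (ed e).toPath = Quiver.Hom.toPath
        (⟨eφ₃ e, hs₃ e, ht₃ e⟩ : @Quiver.Hom φ.V _ (g₃.obj (G₃.s e)) (g₃.obj (G₃.t e)))) ∧
      Function.Injective (fun v : G₃.V => (g₃.obj v : φ.V)) ∧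
      Function.Injective eφ₃ ∧ g = F₃ ⋙ g₃ := by
  intro n
  induction n with
  | zero =>
      intro G hG g eφ hs' ht' hmap hinj hcard
      haveI : Finite G.E := hG.2.2
      haveI hemp : IsEmpty G.E := by
        by_contra h
        rw [not_isEmpty_iff] at h
        have := Nat.card_pos (α := G.E)
        omega
      exact ⟨G, Functor.id _, g, eφ, hs', ht', hG, CompOf.id G, hmap, hinj,
        fun _ _ _ => Subsingleton.elim _ _, (Functor.id_comp g).symm⟩
  | succ n ih =>
      intro G hG g eφ hs' ht' hmap hinj hcard
      haveI : Finite G.V := hG.2.1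
      haveI : Finite G.E := hG.2.2
      by_cases hinjE : Function.Injective eφ
      · exact ⟨G, Functor.id _, g, eφ, hs', ht', hG, CompOf.id G, hmap, hinj,
          hinjE, (Functor.id_comp g).symm⟩
      simp only [Function.Injective, not_forall] at hinjE
      obtain ⟨e₁, e₂, h12, hne⟩ := hinjE
      set Sm : Set G.E := {e | eφ e = eφ e₁} with hSm
      have he₁ : e₁ ∈ Sm := rfl
      have he₂ : e₂ ∈ Sm := h12.symm
      have hcom : ∀ e ∈ Sm, G.s e = G.s e₁ ∧ G.t e = G.t e₁ := by
        intro e he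
        constructor
        · apply hinj
          show (g.obj (G.s e) : φ.V) = g.obj (G.s e₁)
          rw [← hs' e, ← hs' e₁, (he : eφ e = eφ e₁)]
        · apply hinj
          show (g.obj (G.t e) : φ.V) = g.obj (G.t e₁)
          rw [← ht' e, ← ht' e₁, (he : eφ e = eφ e₁)]
      set G₃ : DiGraph := edgeCoarseG G Sm (G.s e₁) (G.t e₁) with hG₃
      set fo : G₃.V → φ.PathCat := fun v => g.obj v with hfo
      set fe : ∀ ε : G₃.E, fo (G₃.s ε) ⟶ fo (G₃.t ε) := fun ε =>
        match ε with
        | .inl e => g.map (ed e.1).toPath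
        | .inr _ => Quiver.Hom.toPath
            (⟨eφ e₁, hs' e₁, ht' e₁⟩ :
              @Quiver.Hom φ.V _ (g.obj (G.s e₁)) (g.obj (G.t e₁))) with hfe
      set g₃ : G₃.PathCat ⥤ φ.PathCat := mkF G₃ fo fe with hg₃
      set eφ₃ : G₃.E → φ.E := fun ε =>
        match ε with
        | .inl e => eφ e.1
        | .inr _ => eφ e₁ with heφ₃
      have hs₃ : ∀ ε, φ.s (eφ₃ ε) = (g₃.obj (G₃.s ε) : φ.V) := by
        rintro (e | ⟨⟩)
        · exact hs' e.1
        · exact hs' e₁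
      have ht₃ : ∀ ε, φ.t (eφ₃ ε) = (g₃.obj (G₃.t ε) : φ.V) := by
        rintro (e | ⟨⟩)
        · exact ht' e.1
        · exact ht' e₁
      have hmap₃ : ∀ ε, g₃.map (ed ε).toPath = Quiver.Hom.toPath
          (⟨eφ₃ ε, hs₃ ε, ht₃ ε⟩ :
            @Quiver.Hom φ.V _ (g₃.obj (G₃.s ε)) (g₃.obj (G₃.t ε))) := by
        rintro (e | ⟨⟩)
        · exact (mkF_ed G₃ fo fe _).trans (hmap e.1)
        · exact (mkF_ed G₃ fo fe _).trans rfl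
      -- acyclicity
      have hG₃acyc : G₃.Acyclic := by
        apply acyclic_lex (G := G₃) (fo := fun v => (fo v : φ.V)) (snd := fun _ => ())
          (R := Reach φ) (Q := fun _ _ => False)
          (fun h h' => h.trans h') (Reach.irrefl hφ.1)
          (fun h h' => h.elim) (fun _ h => h)
        intro ε
        left
        refine ⟨(Quiver.Hom.toPath
          (⟨eφ₃ ε, hs₃ ε, ht₃ ε⟩ :
            @Quiver.Hom φ.V _ (g₃.obj (G₃.s ε)) (g₃.obj (G₃.t ε)))), by
          exact Nat.succ_ne_zero _⟩
      haveI : Finite {e : G.E // e ∉ Sm} := Subtype.finite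
      have hG₃net : IsCausalNet G₃ :=
        ⟨hG₃acyc, hG.2.1, inferInstanceAs (Finite ({e : G.E // e ∉ Sm} ⊕ Unit))⟩
      -- the edge coarse-graining functor
      set F₃ : G.PathCat ⥤ G₃.PathCat :=
        Paths.lift (edgeCoarsePrefunctor (H := G₃) Sm (fun v => v) Sum.inl (Sum.inr ())
          (G.s e₁) (G.t e₁) hcom (fun _ => rfl) (fun _ => rfl) rfl rfl) with hF₃
      have hec : IsEdgeCoarse G G₃ F₃ := by
        refine ⟨Sm, (fun v => v), Sum.inl, Sum.inr (), G.s e₁, G.t e₁, hcom,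
          (fun _ => rfl), (fun _ => rfl), rfl, rfl,
          ⟨e₁, he₁⟩, Function.bijective_id, Sum.inl_injective, by rintro ⟨_, ⟨⟩⟩, ?_, hF₃⟩
        rintro (e | ⟨⟩)
        · exact Or.inr ⟨e, rfl⟩
        · exact Or.inl rfl
      -- factorization
      have hfac : g = F₃ ⋙ g₃ := by
        refine functor_ext (F₁ := g) (F₂ := F₃ ⋙ g₃) rfl ?_
        intro e
        erw [eqToHom_refl, eqToHom_refl, Category.id_comp, Category.comp_id]
        show g.map (ed e).toPath = g₃.map (F₃.map (ed e).toPath)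
        rw [show F₃.map (ed e).toPath = (edgeCoarsePrefunctor (H := G₃) Sm (fun v => v)
          Sum.inl (Sum.inr ()) (G.s e₁) (G.t e₁) hcom (fun _ => rfl) (fun _ => rfl)
          rfl rfl).map (ed e) from Paths.lift_toPath _ _]
        by_cases h : e ∈ Sm
        · erw [edgeCoarsePrefunctor_map_pos (h := h)]
          erw [mkF_map]
          rw [hmap e]
          exact toPath_congr _ _ _ _ (h : eφ e = eφ e₁)
        · erw [edgeCoarsePrefunctor_map_neg (h := h)]
          erw [mkF_map]
          exact ((Category.id_comp _).trans (Category.comp_id _)).symm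
      -- measure decreases
      have hcard₃ : Nat.card G₃.E ≤ n := by
        haveI : Fintype G.E := Fintype.ofFinite _
        letI : Fintype {e : G.E // e ∉ Sm} := Fintype.ofFinite _
        letI : Fintype G₃.E := @instFintypeSum _ _ _ _
        set ι : G₃.E → G.E := Sum.elim (fun e => e.1) (fun _ => e₁) with hι
        have hιinj : Function.Injective ι := by
          rintro (a | ⟨⟩) (b | ⟨⟩) hab <;>
            simp only [hι, Sum.elim_inl, Sum.elim_inr] at hab
          · exact congrArg Sum.inl (Subtype.ext hab)
          · exact absurd (show a.1 ∈ Sm by rw [hab]; exact he₁) a.2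
          · exact absurd (show b.1 ∈ Sm by rw [← hab]; exact he₁) b.2
          · rfl
        have he₂' : e₂ ∉ Set.range ι := by
          rintro ⟨(a | ⟨⟩), rfl⟩
          · exact a.2 he₂
          · exact hne rfl
        have hlt : Fintype.card G₃.E < Fintype.card G.E :=
          Fintype.card_lt_of_injective_of_notMem ι hιinj he₂'
        have e1 : Nat.card G₃.E = Fintype.card G₃.E := Nat.card_eq_fintype_card
        have e2 : Nat.card G.E = Fintype.card G.E := Nat.card_eq_fintype_card
        omega
      obtain ⟨G₄, F', g₄, eφ₄, hs₄, ht₄, hnet₄, hcomp₄, hmap₄, hinj₄, hinjE₄, hfac₄⟩ :=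
        ih G₃ hG₃net g₃ eφ₃ hs₃ ht₃ hmap₃ hinj hcard₃
      refine ⟨G₄, F₃ ⋙ F', g₄, eφ₄, hs₄, ht₄, hnet₄,
        CompOf.comp hec hG₃net hcomp₄, hmap₄, hinj₄, hinjE₄, ?_⟩
      rw [hfac, hfac₄, Functor.assoc]

end Stage3
end Decomp
namespace Decomp
open Quiver

def addVertexG (G : DiGraph) : DiGraph where
  V := G.V ⊕ Unit
  E := G.E
  s := fun e => .inl (G.s e)
  t := fun e => .inl (G.t e)

def addEdgeG (G : DiGraph) (a b : G.V) : DiGraph where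
  V := G.V
  E := G.E ⊕ Unit
  s := fun ε => match ε with | .inl e => G.s e | .inr _ => a
  t := fun ε => match ε with | .inl e => G.t e | .inr _ => b

lemma GraphMap.functor_map_ed {G H : DiGraph} (M : GraphMap G H) (e : G.E) :
    M.functor.map (ed e).toPath = Quiver.Hom.toPath
      (⟨M.eMap e, M.hs e, M.ht e⟩ :
        @Quiver.Hom H.V _ (M.vMap (G.s e)) (M.vMap (G.t e))) := by
  have h := Paths.lift_toPath M.toPrefunctor (ed e)
  exact h.trans rfl

abbrev Elem4 : ∀ G H : DiGraph, (G.PathCat ⥤ H.PathCat) → Prop :=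
  fun G H F => IsIsoMor G H F ∨ IsAddVertex G H F ∨ IsAddEdge G H F ∨ IsSubdivision G H F

section Stage4
variable (φ : DiGraph)

lemma iso_case (hφ : IsCausalNet φ) (G : DiGraph) (g : G.PathCat ⥤ φ.PathCat)
    (eφ : G.E → φ.E)
    (hs' : ∀ e, φ.s (eφ e) = g.obj (G.s e)) (ht' : ∀ e, φ.t (eφ e) = g.obj (G.t e))
    (hmap : ∀ e, g.map (ed e).toPath = Quiver.Hom.toPath
      (⟨eφ e, hs' e, ht' e⟩ : @Quiver.Hom φ.V _ (g.obj (G.s e)) (g.obj (G.t e))))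
    (hbV : Function.Bijective (fun v : G.V => (g.obj v : φ.V)))
    (hbE : Function.Bijective eφ) : CompOf Elem4 G φ g := by
  set M : GraphMap G φ := ⟨fun v => g.obj v, eφ, hs', ht'⟩ with hM
  have hfac : g = M.functor := by
    refine functor_ext (F₁ := g) (F₂ := M.functor) rfl ?_
    intro e
    erw [eqToHom_refl, eqToHom_refl, Category.id_comp, Category.comp_id]
    rw [hmap e, GraphMap.functor_map_ed]; rfl
  rw [hfac]
  exact CompOf.single (Or.inl ⟨M, hbV, hbE, rfl⟩) hφ

lemma stage4 (hφ : IsCausalNet φ) :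
    ∀ (n : ℕ) (G : DiGraph), IsCausalNet G → ∀ (g : G.PathCat ⥤ φ.PathCat)
    (eφ : G.E → φ.E)
    (hs' : ∀ e, φ.s (eφ e) = g.obj (G.s e)) (ht' : ∀ e, φ.t (eφ e) = g.obj (G.t e)),
    (∀ e, g.map (ed e).toPath = Quiver.Hom.toPath
      (⟨eφ e, hs' e, ht' e⟩ : @Quiver.Hom φ.V _ (g.obj (G.s e)) (g.obj (G.t e)))) →
    Function.Injective (fun v : G.V => (g.obj v : φ.V)) →
    Function.Injective eφ →
    (Nat.card φ.V - Nat.card G.V) + (Nat.card φ.E - Nat.card G.E) ≤ n →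
    CompOf Elem4 G φ g := by
  haveI : Finite φ.V := hφ.2.1
  haveI : Finite φ.E := hφ.2.2
  intro n
  induction n with
  | zero =>
      intro G hG g eφ hs' ht' hmap hinjV hinjE hcard
      haveI : Finite G.V := hG.2.1
      haveI : Finite G.E := hG.2.2
      haveI : Fintype G.V := Fintype.ofFinite _
      haveI : Fintype G.E := Fintype.ofFinite _
      haveI : Fintype φ.V := Fintype.ofFinite _
      haveI : Fintype φ.E := Fintype.ofFinite _
      set f : G.V → φ.V := fun v => g.obj v with hf
      have eV : Nat.card G.V = Fintype.card G.V := Nat.card_eq_fintype_card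
      have eE : Nat.card G.E = Fintype.card G.E := Nat.card_eq_fintype_card
      have eV' : Nat.card φ.V = Fintype.card φ.V := Nat.card_eq_fintype_card
      have eE' : Nat.card φ.E = Fintype.card φ.E := Nat.card_eq_fintype_card
      have hsV : Function.Surjective f := by
        by_contra hns
        have := Fintype.card_lt_of_injective_not_surjective f (fun a b h => hinjV h) hns
        omega
      have hsE : Function.Surjective eφ := by
        by_contra hns
        have := Fintype.card_lt_of_injective_not_surjective _ hinjE hns
        omega
      exact iso_case φ hφ G g eφ hs' ht' hmap ⟨hinjV, fun b => hsV b⟩ ⟨hinjE, hsE⟩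
  | succ n ih =>
      intro G hG g eφ hs' ht' hmap hinjV hinjE hcard
      haveI : Finite G.V := hG.2.1
      haveI : Finite G.E := hG.2.2
      by_cases hsV : Function.Surjective (fun v : G.V => (g.obj v : φ.V))
      · by_cases hsE : Function.Surjective eφ
        · exact iso_case φ hφ G g eφ hs' ht' hmap ⟨hinjV, hsV⟩ ⟨hinjE, hsE⟩
        -- add an edge
        · rw [Function.Surjective] at hsE
          push_neg at hsE
          obtain ⟨l₀, hl₀⟩ := hsE
          have hl₀' : l₀ ∉ Set.range eφ := by rintro ⟨e, rfl⟩; exact hl₀ e rfl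
          obtain ⟨a, ha⟩ := hsV (φ.s l₀)
          obtain ⟨b, hb⟩ := hsV (φ.t l₀)
          set G' : DiGraph := addEdgeG G a b with hG'
          set M : GraphMap G G' := ⟨fun v => v, Sum.inl, fun _ => rfl, fun _ => rfl⟩ with hM
          have hAdd : IsAddEdge G G' M.functor := by
            refine ⟨M, Function.bijective_id, Sum.inl_injective,
              ⟨Sum.inr (), by rintro ⟨_, ⟨⟩⟩, ?_⟩, rfl⟩
            rintro (e | ⟨⟩)
            · exact Or.inr ⟨e, rfl⟩
            · exact Or.inl rfl
          set fo : G'.V → φ.PathCat := fun v => g.obj v with hfo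
          set fe : ∀ ε : G'.E, fo (G'.s ε) ⟶ fo (G'.t ε) := fun ε =>
            match ε with
            | .inl e => g.map (ed e).toPath
            | .inr _ => Quiver.Hom.toPath
                (⟨l₀, ha.symm, hb.symm⟩ : @Quiver.Hom φ.V _ (g.obj a) (g.obj b)) with hfe
          set g' : G'.PathCat ⥤ φ.PathCat := mkF G' fo fe with hg'
          set eφ' : G'.E → φ.E := fun ε =>
            match ε with | .inl e => eφ e | .inr _ => l₀ with heφ'
          have hs'' : ∀ ε, φ.s (eφ' ε) = (g'.obj (G'.s ε) : φ.V) := by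
            rintro (e | ⟨⟩)
            · exact hs' e
            · exact ha.symm
          have ht'' : ∀ ε, φ.t (eφ' ε) = (g'.obj (G'.t ε) : φ.V) := by
            rintro (e | ⟨⟩)
            · exact ht' e
            · exact hb.symm
          have hmap' : ∀ ε, g'.map (ed ε).toPath = Quiver.Hom.toPath
              (⟨eφ' ε, hs'' ε, ht'' ε⟩ :
                @Quiver.Hom φ.V _ (g'.obj (G'.s ε)) (g'.obj (G'.t ε))) := by
            rintro (e | ⟨⟩)
            · exact (mkF_ed G' fo fe _).trans (hmap e)
            · exact (mkF_ed G' fo fe _).trans rfl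
          have hinjE' : Function.Injective eφ' := by
            rintro (e | ⟨⟩) (e' | ⟨⟩) h <;>
              simp only [heφ'] at h
            · exact congrArg Sum.inl (hinjE h)
            · exact absurd ⟨e, h⟩ hl₀'
            · exact absurd ⟨e', h.symm⟩ hl₀'
            · rfl
          have hG'acyc : G'.Acyclic := by
            apply acyclic_lex (G := G') (fo := fun v => (g'.obj v : φ.V))
              (snd := fun _ => ()) (R := Reach φ) (Q := fun _ _ => False)
              (fun h h' => h.trans h') (Reach.irrefl hφ.1)
              (fun h h' => h.elim) (fun _ h => h)
            intro ε
            exact Or.inl ⟨Quiver.Hom.toPath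
              (⟨eφ' ε, hs'' ε, ht'' ε⟩ :
                @Quiver.Hom φ.V _ (g'.obj (G'.s ε)) (g'.obj (G'.t ε))), by
              exact Nat.succ_ne_zero _⟩
          have hG'net : IsCausalNet G' :=
            ⟨hG'acyc, hG.2.1, inferInstanceAs (Finite (G.E ⊕ Unit))⟩
          have hfac : g = M.functor ⋙ g' := by
            refine functor_ext (F₁ := g) (F₂ := M.functor ⋙ g') rfl ?_
            intro e
            erw [eqToHom_refl, eqToHom_refl, Category.id_comp, Category.comp_id]
            show g.map (ed e).toPath = g'.map (M.functor.map (ed e).toPath)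
            erw [GraphMap.functor_map_ed, mkF_map]
            exact ((Category.id_comp _).trans (Category.comp_id _)).symm
            try rfl
          have hcard' : (Nat.card φ.V - Nat.card G'.V) +
              (Nat.card φ.E - Nat.card G'.E) ≤ n := by
            haveI : Fintype G.E := Fintype.ofFinite _
            haveI : Fintype φ.E := Fintype.ofFinite _
            letI : Fintype G'.E := @instFintypeSum _ _ _ _
            have h1 : Fintype.card G.E < Fintype.card φ.E :=
              Fintype.card_lt_of_injective_not_surjective _ hinjE
                (by rw [Function.Surjective]; push_neg; exact ⟨l₀, hl₀⟩)
            have h2 : Fintype.card G'.E = Fintype.card G.E + 1 := by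
              rw [show Fintype.card G'.E = Fintype.card (G.E ⊕ Unit) from rfl]
              simp
            have e0 : Nat.card G'.V = Nat.card G.V := rfl
            have e1 : Nat.card G'.E = Fintype.card G'.E := Nat.card_eq_fintype_card
            have e2 : Nat.card G.E = Fintype.card G.E := Nat.card_eq_fintype_card
            have e3 : Nat.card φ.E = Fintype.card φ.E := Nat.card_eq_fintype_card
            omega
          have hrest := ih G' hG'net g' eφ' hs'' ht'' hmap' hinjV hinjE' hcard'
          rw [hfac]
          exact CompOf.comp (Or.inr (Or.inr (Or.inl hAdd))) hG'net hrest
      -- add a vertex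
      · rw [Function.Surjective] at hsV
        push_neg at hsV
        obtain ⟨v₀, hv₀⟩ := hsV
        set G' : DiGraph := addVertexG G with hG'
        set M : GraphMap G G' := ⟨Sum.inl, fun e => e, fun _ => rfl, fun _ => rfl⟩ with hM
        have hAdd : IsAddVertex G G' M.functor := by
          refine ⟨M, Sum.inl_injective, Function.bijective_id,
            ⟨Sum.inr (), by rintro ⟨_, ⟨⟩⟩, ?_⟩, rfl⟩
          rintro (w | ⟨⟩)
          · exact Or.inr ⟨w, rfl⟩
          · exact Or.inl rfl
        set fo : G'.V → φ.PathCat := Sum.elim (fun v => g.obj v) (fun _ => v₀) with hfo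
        set fe : ∀ ε : G'.E, fo (G'.s ε) ⟶ fo (G'.t ε) := fun ε =>
          g.map (ed (G := G) ε).toPath with hfe
        set g' : G'.PathCat ⥤ φ.PathCat := mkF G' fo fe with hg'
        have hs'' : ∀ ε : G'.E, φ.s (eφ ε) = (g'.obj (G'.s ε) : φ.V) := fun e => hs' e
        have ht'' : ∀ ε : G'.E, φ.t (eφ ε) = (g'.obj (G'.t ε) : φ.V) := fun e => ht' e
        have hmap' : ∀ ε : G'.E, g'.map (ed ε).toPath = Quiver.Hom.toPath
            (⟨eφ ε, hs'' ε, ht'' ε⟩ :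
              @Quiver.Hom φ.V _ (g'.obj (G'.s ε)) (g'.obj (G'.t ε))) := by
          intro e
          exact (mkF_ed G' fo fe _).trans (hmap e)
        have hinjV' : Function.Injective (fun w : G'.V => (g'.obj w : φ.V)) := by
          rintro (w | ⟨⟩) (w' | ⟨⟩) h <;>
            simp only [hfo, Sum.elim_inl, Sum.elim_inr] at h
          · exact congrArg Sum.inl (hinjV h)
          · exact absurd h (hv₀ w)
          · exact absurd h.symm (hv₀ w')
          · rfl
        have hG'acyc : G'.Acyclic := by
          apply acyclic_lex (G := G') (fo := fun v => (g'.obj v : φ.V))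
            (snd := fun _ => ()) (R := Reach φ) (Q := fun _ _ => False)
            (fun h h' => h.trans h') (Reach.irrefl hφ.1)
            (fun h h' => h.elim) (fun _ h => h)
          intro ε
          exact Or.inl ⟨Quiver.Hom.toPath
            (⟨eφ ε, hs'' ε, ht'' ε⟩ :
              @Quiver.Hom φ.V _ (g'.obj (G'.s ε)) (g'.obj (G'.t ε))), by
            exact Nat.succ_ne_zero _⟩
        have hG'net : IsCausalNet G' :=
          ⟨hG'acyc, inferInstanceAs (Finite (G.V ⊕ Unit)), hG.2.2⟩
        have hfac : g = M.functor ⋙ g' := by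
          refine functor_ext (F₁ := g) (F₂ := M.functor ⋙ g') rfl ?_
          intro e
          erw [eqToHom_refl, eqToHom_refl, Category.id_comp, Category.comp_id]
          show g.map (ed e).toPath = g'.map (M.functor.map (ed e).toPath)
          erw [GraphMap.functor_map_ed, mkF_map]
          exact ((Category.id_comp _).trans (Category.comp_id _)).symm
          try rfl
        have hcard' : (Nat.card φ.V - Nat.card G'.V) +
            (Nat.card φ.E - Nat.card G'.E) ≤ n := by
          haveI : Fintype G.V := Fintype.ofFinite _
          haveI : Fintype φ.V := Fintype.ofFinite _
          letI : Fintype G'.V := @instFintypeSum _ _ _ _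
          have hinjV2 : Function.Injective (show G.V → φ.V from fun v => g.obj v) :=
            fun a b h => hinjV h
          have hnsV2 : ¬ Function.Surjective (show G.V → φ.V from fun v => g.obj v) := by
            intro hsurj
            obtain ⟨a, ha⟩ := hsurj v₀
            exact hv₀ a ha
          have h1 : Fintype.card G.V < Fintype.card φ.V :=
            Fintype.card_lt_of_injective_not_surjective _ hinjV2 hnsV2
          have h2 : Fintype.card G'.V = Fintype.card G.V + 1 := by
            rw [show Fintype.card G'.V = Fintype.card (G.V ⊕ Unit) from rfl]
            simp
          have e0 : Nat.card G'.E = Nat.card G.E := rfl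
          have e1 : Nat.card G'.V = Fintype.card G'.V := Nat.card_eq_fintype_card
          have e2 : Nat.card G.V = Fintype.card G.V := Nat.card_eq_fintype_card
          have e3 : Nat.card φ.V = Fintype.card φ.V := Nat.card_eq_fintype_card
          omega
        have hrest := ih G' hG'net g' eφ hs'' ht'' hmap' hinjV' hinjE hcard'
        rw [hfac]
        exact CompOf.comp (Or.inr (Or.inl hAdd)) hG'net hrest

end Stage4
end Decomp
namespace Decomp
open Quiver

lemma convert (φ G : DiGraph) (hφ : IsCausalNet φ) (hG : IsCausalNet G)
    (g : G.PathCat ⥤ φ.PathCat)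
    (hlen : ∀ e : G.E, Quiver.Path.length (g.map (ed e).toPath) ≤ 1)
    (hinj : Function.Injective (fun v : G.V => (g.obj v : φ.V))) :
    ∃ (eφ : G.E → φ.E)
      (hs' : ∀ e, φ.s (eφ e) = g.obj (G.s e)) (ht' : ∀ e, φ.t (eφ e) = g.obj (G.t e)),
      ∀ e, g.map (ed e).toPath = Quiver.Hom.toPath
        (⟨eφ e, hs' e, ht' e⟩ : @Quiver.Hom φ.V _ (g.obj (G.s e)) (g.obj (G.t e))) := by
  have h1 : ∀ e : G.E, ∃ l : @Quiver.Hom φ.V _ (g.obj (G.s e)) (g.obj (G.t e)),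
      g.map (ed e).toPath = Quiver.Hom.toPath l := by
    intro e
    have hlen1 : Quiver.Path.length (g.map (ed e).toPath) = 1 := by
      by_contra h
      have h0 : Quiver.Path.length (g.map (ed e).toPath) = 0 := by
        have := hlen e; omega
      have heq := endpoints_eq_of_length_zero (W := φ.V) (g.map (ed e).toPath) h0
      have hst : G.s e = G.t e := hinj heq
      have r := Reach.of_ed e
      rw [← hst] at r
      exact Reach.irrefl hG.1 _ r
    obtain ⟨l, hl⟩ := exists_edge_of_length_one (W := φ.V) (g.map (ed e).toPath) hlen1
    exact ⟨l, hl⟩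
  choose arr harr using h1
  exact ⟨fun e => (arr e).1, fun e => (arr e).2.1, fun e => (arr e).2.2,
    fun e => (harr e).trans rfl⟩

end Decomp


open Decomp

/--
Any functor `f : F(ψ) ⥤ F(φ)` between the path categories of
finite acyclic directed graphs decomposes as a finite composite of elementary
morphisms; more precisely `f` factors as
`F(ψ) ⟶ F(ψ₁) ⟶ F(ψ₂) ⟶ F(ψ₃) ⟶ F(φ)` where the first arrow is a composite of
edge subdivisions, the second a composite of coarse-grainings of vertices, the
third a composite of coarse-grainings of edges, and the last a composite of
isomorphisms, vertex additions, edge additions and edge subdivisions.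
-/
theorem elementary_decomposition (ψ φ : DiGraph)
    (hψ : IsCausalNet ψ) (hφ : IsCausalNet φ) (f : ψ.PathCat ⥤ φ.PathCat) :
    CompOf IsElementary ψ φ f ∧
    ∃ (ψ₁ ψ₂ ψ₃ : DiGraph), IsCausalNet ψ₁ ∧ IsCausalNet ψ₂ ∧ IsCausalNet ψ₃ ∧
      ∃ (F₁ : ψ.PathCat ⥤ ψ₁.PathCat) (F₂ : ψ₁.PathCat ⥤ ψ₂.PathCat)
        (F₃ : ψ₂.PathCat ⥤ ψ₃.PathCat) (F₄ : ψ₃.PathCat ⥤ φ.PathCat),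
        CompOf IsSubdivision ψ ψ₁ F₁ ∧
        CompOf IsVertexCoarse ψ₁ ψ₂ F₂ ∧
        CompOf IsEdgeCoarse ψ₂ ψ₃ F₃ ∧
        CompOf (fun G H F =>
          IsIsoMor G H F ∨ IsAddVertex G H F ∨ IsAddEdge G H F ∨
            IsSubdivision G H F) ψ₃ φ F₄ ∧
        f = F₁ ⋙ F₂ ⋙ F₃ ⋙ F₄ := by
  obtain ⟨ψ₁, F₁, g₁, h1net, h1comp, h1len, h1fac⟩ :=
    stage1 φ hφ _ ψ hψ f le_rfl
  obtain ⟨ψ₂, F₂, g₂, h2net, h2comp, h2len, h2inj, h2fac⟩ :=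
    stage2 φ hφ _ ψ₁ h1net g₁ h1len le_rfl
  obtain ⟨eφ, hs', ht', hmapc⟩ := convert φ ψ₂ hφ h2net g₂ h2len h2inj
  obtain ⟨ψ₃, F₃, g₃, eφ₃, hs₃, ht₃, h3net, h3comp, h3map, h3injV, h3injE, h3fac⟩ :=
    stage3 φ hφ _ ψ₂ h2net g₂ eφ hs' ht' hmapc h2inj le_rfl
  have h4 : CompOf Elem4 ψ₃ φ g₃ :=
    stage4 φ hφ _ ψ₃ h3net g₃ eφ₃ hs₃ ht₃ h3map h3injV h3injE le_rfl
  have hfac : f = F₁ ⋙ F₂ ⋙ F₃ ⋙ g₃ := by rw [h1fac, h2fac, h3fac]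
  constructor
  · rw [hfac]
    have c1 := CompOf.mono (Q := IsElementary)
      (fun G H F h => Or.inr (Or.inr (Or.inr (Or.inl h)))) h1comp
    have c2 := CompOf.mono (Q := IsElementary)
      (fun G H F h => Or.inr (Or.inr (Or.inr (Or.inr (Or.inr h))))) h2comp
    have c3 := CompOf.mono (Q := IsElementary)
      (fun G H F h => Or.inr (Or.inr (Or.inr (Or.inr (Or.inl h))))) h3comp
    have c4 : CompOf IsElementary ψ₃ φ g₃ := CompOf.mono (Q := IsElementary)
      (fun G H F h => by
        rcases h with h | h | h | h
        · exact Or.inl h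
        · exact Or.inr (Or.inl h)
        · exact Or.inr (Or.inr (Or.inl h))
        · exact Or.inr (Or.inr (Or.inr (Or.inl h)))) h4
    exact CompOf.trans c1 (CompOf.trans c2 (CompOf.trans c3 c4))
  · exact ⟨ψ₁, ψ₂, ψ₃, h1net, h2net, h3net, F₁, F₂, F₃, g₃,
      h1comp, h2comp, h3comp, h4, hfac⟩
end
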